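/- Assume δ < r_I and (1-θ)·β·p·T_max/(c·r_I) < 1, and set T̃₂ = (r_I - δ)·T⁰/(r_I - δ·R₀). Then: (i) if R₀ ≤ 1 then h₂(T̃₂) ≥ 0; (ii) if 1 < R₀ < r_I/δ then h₂(T̃₂) < 0. Consequently the positive root T* of h₂ satisfies T* ≥ T̃₂ when R₀ ≤ 1 and T* < T̃₂ when 1 < R₀ < r_I/δ. -/

import Mathlib

open Set

/-- The uninfected equilibrium value `T⁰`. -/
noncomputable def hcvT0 (s rT dT Tmax : ℝ) : ℝ :=
  Tmax / (2 * rT) * (rT - dT + Real.sqrt ((rT - dT) ^ 2 + 4 * rT * s / Tmax))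

/-- The basic reproduction number `R₀` (with `1 - θ = (1-ε)(1-η)`). -/
noncomputable def hcvR0 (s rT rI dT dI Tmax β p q c η ε : ℝ) : ℝ :=
  rI / (dI + q) * (1 - hcvT0 s rT dT Tmax / Tmax)
    + (1 - ε) * (1 - η) * β * p * hcvT0 s rT dT Tmax / (c * (dI + q))

/-- The quadratic polynomial `h₂` (with `δ = d_I + q`, `A = (1-θ)βpT_max/c`). -/
noncomputable def hcvH2 (s rT rI dT dI Tmax β p q c η ε : ℝ) (T : ℝ) : ℝ :=
  s + q * (Tmax / rI) * (rI - (dI + q))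
    + (rT - (dT + q) - (rT / rI) * (rI - (dI + q))
        - ((1 - ε) * (1 - η) * β * p * Tmax / c / rI) * (rI - (dI + q))
        + ((1 - ε) * (1 - η) * β * p * Tmax / c) * q / rI) * T
    - (rT / Tmax) * (((1 - ε) * (1 - η) * β * p * Tmax / c) ^ 2 / (rI * rT)
        + ((1 - ε) * (1 - η) * β * p * Tmax / c) / rI
        - ((1 - ε) * (1 - η) * β * p * Tmax / c) / rT) * T ^ 2

/-- Sign of a concave quadratic `h0 + B t - C t^2` (with `h0, C > 0`) at a positive point,
relative to its unique positive root. -/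
lemma quad_sign_iff (h0 B C t R : ℝ) (hh0 : 0 < h0) (hC : 0 < C) (ht : 0 < t)
    (hR : 0 < R) (hroot : h0 + B * R - C * R ^ 2 = 0) :
    (0 ≤ h0 + B * t - C * t ^ 2 ↔ t ≤ R) ∧ (h0 + B * t - C * t ^ 2 < 0 ↔ R < t) := by
  have key : (h0 + B * t - C * t ^ 2) * R = (R - t) * (C * t * R + h0) := by
    linear_combination t * hroot
  have hfac : 0 < C * t * R + h0 := by positivity
  constructor
  · constructor
    · intro h
      nlinarith [key]
    · intro h
      nlinarith [key, mul_nonneg (sub_nonneg.mpr h) hfac.le]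
  · constructor
    · intro h
      nlinarith [key]
    · intro h
      nlinarith [key]

lemma hcvT0_facts (s rT dT Tmax : ℝ) (hs : 0 < s) (hrT : 0 < rT) (hTmax : 0 < Tmax) :
    0 < hcvT0 s rT dT Tmax ∧
    s + (rT - dT) * hcvT0 s rT dT Tmax - (rT / Tmax) * (hcvT0 s rT dT Tmax) ^ 2 = 0 := by
  set u := Real.sqrt ((rT - dT) ^ 2 + 4 * rT * s / Tmax) with hu
  have hX : (0:ℝ) ≤ (rT - dT) ^ 2 + 4 * rT * s / Tmax := by positivity
  have hu2 : u ^ 2 = (rT - dT) ^ 2 + 4 * rT * s / Tmax := Real.sq_sqrt hX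
  have hu0 : 0 ≤ u := Real.sqrt_nonneg _
  have hpos : 0 < 4 * rT * s / Tmax := by positivity
  have hsum : 0 < rT - dT + u := by nlinarith [hu2, hu0, hpos]
  have hT0 : hcvT0 s rT dT Tmax = Tmax / (2 * rT) * (rT - dT + u) := rfl
  constructor
  · rw [hT0]; positivity
  · rw [hT0]
    have h2rT : (2 * rT) ≠ 0 := by positivity
    have hTm : Tmax ≠ 0 := ne_of_gt hTmax
    have hu2' : u ^ 2 * Tmax = (rT - dT) ^ 2 * Tmax + 4 * rT * s := by
      rw [hu2]; field_simp
    field_simp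
    linear_combination (-1) * hu2'

lemma hcvR0_rel (s rT rI dT dI Tmax β p q c η ε : ℝ)
    (hdq : dI + q ≠ 0) (hc : c ≠ 0) (hTm : Tmax ≠ 0) :
    rI - (dI + q) * hcvR0 s rT rI dT dI Tmax β p q c η ε
      = (rI - (1 - ε) * (1 - η) * β * p * Tmax / c) * hcvT0 s rT dT Tmax / Tmax := by
  simp only [hcvR0]
  field_simp
  ring

set_option maxHeartbeats 1000000 in
lemma hcvH2_eq_g (s rT rI dT dI Tmax β p q c η ε : ℝ)
    (hrI : rI ≠ 0) (hrT : rT ≠ 0) (hc : c ≠ 0) (hTm : Tmax ≠ 0)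
    (hD : rI - (1 - ε) * (1 - η) * β * p * Tmax / c ≠ 0) :
    hcvH2 s rT rI dT dI Tmax β p q c η ε
        ((rI - (dI + q)) * Tmax / (rI - (1 - ε) * (1 - η) * β * p * Tmax / c))
      = s + (rT - dT) * ((rI - (dI + q)) * Tmax / (rI - (1 - ε) * (1 - η) * β * p * Tmax / c))
          - (rT / Tmax) * ((rI - (dI + q)) * Tmax / (rI - (1 - ε) * (1 - η) * β * p * Tmax / c)) ^ 2 := by
  simp only [hcvH2]
  set A := (1 - ε) * (1 - η) * β * p * Tmax / c with hA
  field_simp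
  ring

set_option maxHeartbeats 1000000

/-- Location of the positive root `T*` of `h₂` relative to `T̃₂` when
`δ < r_I` and `(1-θ)βpT_max/(c r_I) < 1`. -/
theorem hcv_root_location_delta_lt
    (s rT rI dT dI Tmax β p q c η ε : ℝ)
    (hs : 0 < s) (hrT : 0 < rT) (hrI : 0 < rI) (hdT : 0 < dT) (hdI : 0 < dI)
    (hTmax : 0 < Tmax) (hβ : 0 < β) (hp : 0 < p) (hq : 0 < q) (hc : 0 < c)
    (hη : η ∈ Set.Ico (0 : ℝ) 1) (hε : ε ∈ Set.Ico (0 : ℝ) 1)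
    (hrIT : rI ≤ rT) (hsT : s ≤ dT * Tmax) (hdTI : dT ≤ dI)
    (hδ : dI + q < rI)
    (hA : (1 - ε) * (1 - η) * β * p * Tmax / (c * rI) < 1) :
    (hcvR0 s rT rI dT dI Tmax β p q c η ε ≤ 1 →
      0 ≤ hcvH2 s rT rI dT dI Tmax β p q c η ε
        ((rI - (dI + q)) * hcvT0 s rT dT Tmax
          / (rI - (dI + q) * hcvR0 s rT rI dT dI Tmax β p q c η ε))) ∧
    (1 < hcvR0 s rT rI dT dI Tmax β p q c η ε →
      hcvR0 s rT rI dT dI Tmax β p q c η ε < rI / (dI + q) →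
      hcvH2 s rT rI dT dI Tmax β p q c η ε
        ((rI - (dI + q)) * hcvT0 s rT dT Tmax
          / (rI - (dI + q) * hcvR0 s rT rI dT dI Tmax β p q c η ε)) < 0) ∧
    (∀ Tstar : ℝ, 0 < Tstar →
      hcvH2 s rT rI dT dI Tmax β p q c η ε Tstar = 0 →
      (hcvR0 s rT rI dT dI Tmax β p q c η ε ≤ 1 →
        (rI - (dI + q)) * hcvT0 s rT dT Tmax
          / (rI - (dI + q) * hcvR0 s rT rI dT dI Tmax β p q c η ε) ≤ Tstar) ∧
      (1 < hcvR0 s rT rI dT dI Tmax β p q c η ε →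
        hcvR0 s rT rI dT dI Tmax β p q c η ε < rI / (dI + q) →
        Tstar < (rI - (dI + q)) * hcvT0 s rT dT Tmax
          / (rI - (dI + q) * hcvR0 s rT rI dT dI Tmax β p q c η ε))) := by
  obtain ⟨hη0, hη1⟩ := hη
  obtain ⟨hε0, hε1⟩ := hε
  have hδpos : 0 < dI + q := by linarith
  have hApos : 0 < (1 - ε) * (1 - η) * β * p * Tmax / c := by
    have h1 : 0 < 1 - ε := by linarith
    have h2 : 0 < 1 - η := by linarith
    positivity
  have hAltrI : (1 - ε) * (1 - η) * β * p * Tmax / c < rI := by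
    rw [div_lt_one (by positivity : (0:ℝ) < c * rI)] at hA
    rw [div_lt_iff₀ hc]
    nlinarith [hA]
  have hDpos : 0 < rI - (1 - ε) * (1 - η) * β * p * Tmax / c := by linarith
  obtain ⟨hT0pos, hgT0⟩ := hcvT0_facts s rT dT Tmax hs hrT hTmax
  have hrel := hcvR0_rel s rT rI dT dI Tmax β p q c η ε (ne_of_gt hδpos)
    (ne_of_gt hc) (ne_of_gt hTmax)
  have hval := hcvH2_eq_g s rT rI dT dI Tmax β p q c η ε (ne_of_gt hrI)
    (ne_of_gt hrT) (ne_of_gt hc) (ne_of_gt hTmax) (ne_of_gt hDpos)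
  set T0 := hcvT0 s rT dT Tmax with hT0def
  set R0 := hcvR0 s rT rI dT dI Tmax β p q c η ε with hR0def
  set T2 := (rI - (dI + q)) * Tmax / (rI - (1 - ε) * (1 - η) * β * p * Tmax / c)
    with hT2def
  have hT2pos : 0 < T2 := by
    rw [hT2def]
    exact div_pos (mul_pos (by linarith) hTmax) hDpos
  have hden : 0 < rI - (dI + q) * R0 := by
    rw [hrel]
    positivity
  have hT0rel : T0 * (rI - (1 - ε) * (1 - η) * β * p * Tmax / c)
      = (rI - (dI + q) * R0) * Tmax := by
    rw [hrel, div_mul_cancel₀ _ (ne_of_gt hTmax)]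
    ring
  have hT2rel : T2 * (rI - (1 - ε) * (1 - η) * β * p * Tmax / c)
      = (rI - (dI + q)) * Tmax := by
    rw [hT2def, div_mul_cancel₀ _ (ne_of_gt hDpos)]
  have hT2eq : (rI - (dI + q)) * T0 / (rI - (dI + q) * R0) = T2 := by
    rw [hT2def, div_eq_div_iff (ne_of_gt hden) (ne_of_gt hDpos)]
    linear_combination (rI - (dI + q)) * hT0rel
  have hgsgn := quad_sign_iff s (rT - dT) (rT / Tmax) T2 T0 hs
    (by positivity) hT2pos hT0pos hgT0
  have hle_of_R0 : R0 ≤ 1 → T2 ≤ T0 := by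
    intro h
    nlinarith [hT0rel, hT2rel, hDpos,
      mul_nonneg (mul_nonneg hδpos.le (by linarith : (0:ℝ) ≤ 1 - R0)) hTmax.le]
  have hgt_of_R0 : 1 < R0 → T0 < T2 := by
    intro h
    nlinarith [hT0rel, hT2rel, hDpos,
      mul_pos (mul_pos hδpos (by linarith : (0:ℝ) < R0 - 1)) hTmax]
  have part1 : R0 ≤ 1 → 0 ≤ hcvH2 s rT rI dT dI Tmax β p q c η ε T2 := by
    intro h
    rw [hval]
    exact hgsgn.1.mpr (hle_of_R0 h)
  have part2 : 1 < R0 → hcvH2 s rT rI dT dI Tmax β p q c η ε T2 < 0 := by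
    intro h
    rw [hval]
    exact hgsgn.2.mpr (hgt_of_R0 h)
  refine ⟨fun h => by rw [hT2eq]; exact part1 h,
    fun h _ => by rw [hT2eq]; exact part2 h, ?_⟩
  intro Tstar hTs hroot
  have hh0pos : 0 < s + q * (Tmax / rI) * (rI - (dI + q)) := by
    have := mul_pos (mul_pos hq (div_pos hTmax hrI)) (by linarith : (0:ℝ) < rI - (dI + q))
    linarith
  have hCeq : (rT / Tmax) * (((1 - ε) * (1 - η) * β * p * Tmax / c) ^ 2 / (rI * rT)
        + ((1 - ε) * (1 - η) * β * p * Tmax / c) / rI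
        - ((1 - ε) * (1 - η) * β * p * Tmax / c) / rT)
      = ((1 - ε) * (1 - η) * β * p * Tmax / c)
        * (((1 - ε) * (1 - η) * β * p * Tmax / c) + rT - rI) / (rI * Tmax) := by
    field_simp
  have hCpos : 0 < (rT / Tmax) * (((1 - ε) * (1 - η) * β * p * Tmax / c) ^ 2 / (rI * rT)
        + ((1 - ε) * (1 - η) * β * p * Tmax / c) / rI
        - ((1 - ε) * (1 - η) * β * p * Tmax / c) / rT) := by
    rw [hCeq]
    exact div_pos (mul_pos hApos (by linarith)) (mul_pos hrI hTmax)
  simp only [hcvH2] at hroot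
  have hq2 := quad_sign_iff (s + q * (Tmax / rI) * (rI - (dI + q)))
    (rT - (dT + q) - (rT / rI) * (rI - (dI + q))
        - ((1 - ε) * (1 - η) * β * p * Tmax / c / rI) * (rI - (dI + q))
        + ((1 - ε) * (1 - η) * β * p * Tmax / c) * q / rI)
    ((rT / Tmax) * (((1 - ε) * (1 - η) * β * p * Tmax / c) ^ 2 / (rI * rT)
        + ((1 - ε) * (1 - η) * β * p * Tmax / c) / rI
        - ((1 - ε) * (1 - η) * β * p * Tmax / c) / rT))
    T2 Tstar hh0pos hCpos hT2pos hTs (by linarith [hroot])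
  have hh2T2 : hcvH2 s rT rI dT dI Tmax β p q c η ε T2
      = (s + q * (Tmax / rI) * (rI - (dI + q)))
        + (rT - (dT + q) - (rT / rI) * (rI - (dI + q))
            - ((1 - ε) * (1 - η) * β * p * Tmax / c / rI) * (rI - (dI + q))
            + ((1 - ε) * (1 - η) * β * p * Tmax / c) * q / rI) * T2
        - ((rT / Tmax) * (((1 - ε) * (1 - η) * β * p * Tmax / c) ^ 2 / (rI * rT)
            + ((1 - ε) * (1 - η) * β * p * Tmax / c) / rI
            - ((1 - ε) * (1 - η) * β * p * Tmax / c) / rT)) * T2 ^ 2 := by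
    simp only [hcvH2]
  constructor
  · intro h
    rw [hT2eq]
    exact hq2.1.mp (hh2T2 ▸ part1 h)
  · intro h _
    rw [hT2eq]
    exact hq2.2.mp (hh2T2 ▸ part2 h)
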